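/- Let (X,φ) be an expansive dynamical system, let (U,V,γ) be a local conjugacy, and let W ⊆ U be compact. Then for all ε > 0 there exists δ > 0 such that for all z ∈ W: γ(Xˢ(z,δ)) ⊆ Xˢ(γ(z),ε) and γ(Xᵘ(z,δ)) ⊆ Xᵘ(γ(z),ε). -/

import Mathlib

open Filter Topology Set

namespace Paper

variable {X : Type*} [MetricSpace X] [CompactSpace X]

/-- The `n`-th iterate (for `n : ℤ`) of the homeomorphism `φ`. -/
def It (φ : X ≃ₜ X) (n : ℤ) : X → X := fun x => (φ.toEquiv ^ n) x

/-- The local stable set `Xˢ(x, ε)`. -/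
def locS (φ : X ≃ₜ X) (x : X) (ε : ℝ) : Set X :=
  {y | ∀ n : ℕ, dist (It φ n x) (It φ n y) ≤ ε}

/-- The local unstable set `Xᵘ(x, ε)`. -/
def locU (φ : X ≃ₜ X) (x : X) (ε : ℝ) : Set X :=
  {y | ∀ n : ℕ, dist (It φ (-(n : ℤ)) x) (It φ (-(n : ℤ)) y) ≤ ε}

/-- The set `D_ε` on which the bracket is defined. -/
def Dset (φ : X ≃ₜ X) (ε : ℝ) : Set (X × X) :=
  {p | (locS φ p.1 ε ∩ locU φ p.2 ε).Nonempty}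

/-- `(X, φ)` is expansive with expansiveness constant `εX`. -/
def IsExpansive (φ : X ≃ₜ X) (εX : ℝ) : Prop :=
  0 < εX ∧ ∀ x y : X, (∀ n : ℤ, dist (It φ n x) (It φ n y) ≤ εX) → x = y

/-- The metric is adapted (Fried), with constants `η` and `lam`. -/
def IsAdapted (φ : X ≃ₜ X) (η lam : ℝ) : Prop :=
  0 < η ∧ 0 < lam ∧ lam < 1 ∧
    (∀ x y : X, y ∈ locS φ x η → dist (φ x) (φ y) ≤ lam * dist x y) ∧
    (∀ x y : X, y ∈ locU φ x η → dist (φ.symm x) (φ.symm y) ≤ lam * dist x y)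

/-- `p` is a periodic point of `φ`. -/
def IsPeriodic (φ : X ≃ₜ X) (p : X) : Prop :=
  ∃ n : ℕ, 1 ≤ n ∧ It φ n p = p

/-- `x` is a synchronizing point: `(x, x)` is in the interior of `D_ε` for
some `0 < ε ≤ ε₀`. -/
def IsSyncPt (φ : X ≃ₜ X) (ε₀ : ℝ) (x : X) : Prop :=
  ∃ ε : ℝ, 0 < ε ∧ ε ≤ ε₀ ∧ (x, x) ∈ interior (Dset φ ε)

/-- `(X, φ)` is irreducible. -/
def Irred (φ : X ≃ₜ X) : Prop :=
  ∀ U V : Set X, IsOpen U → IsOpen V → U.Nonempty → V.Nonempty →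
    ∃ n : ℕ, 0 < n ∧ (It φ n '' U ∩ V).Nonempty

/-- `(X, φ)` is mixing. -/
def Mixing (φ : X ≃ₜ X) : Prop :=
  ∀ U V : Set X, IsOpen U → IsOpen V → U.Nonempty → V.Nonempty →
    ∃ N : ℕ, ∀ n : ℕ, N ≤ n → (It φ n '' U ∩ V).Nonempty

/-- Every point of `(X, φ)` is non-wandering. -/
def NonWandering (φ : X ≃ₜ X) : Prop :=
  ∀ x : X, ∀ U ∈ 𝓝 x, ∃ n : ℕ, 0 < n ∧ (It φ n '' U ∩ U).Nonempty

/-- Stable equivalence `x ∼ₛ y`. -/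
def StableEq (φ : X ≃ₜ X) (x y : X) : Prop :=
  Tendsto (fun n : ℕ => dist (It φ n x) (It φ n y)) atTop (𝓝 0)

/-- Unstable equivalence `x ∼ᵤ y`. -/
def UnstableEq (φ : X ≃ₜ X) (x y : X) : Prop :=
  Tendsto (fun n : ℕ => dist (It φ (-(n : ℤ)) x) (It φ (-(n : ℤ)) y)) atTop (𝓝 0)

/-- Local conjugacy `x ∼_lc y`: a homeomorphism `γ : U → V` of open
neighborhoods with `γ x = y` and `sup_{z ∈ U} d(φⁿ z, φⁿ (γ z)) → 0` as
`n → ±∞`. -/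
def LocConj (φ : X ≃ₜ X) (x y : X) : Prop :=
  ∃ (U V : Set X) (γ γinv : X → X),
    IsOpen U ∧ IsOpen V ∧ x ∈ U ∧ y ∈ V ∧ γ x = y ∧
    Set.MapsTo γ U V ∧ Set.MapsTo γinv V U ∧
    (∀ z ∈ U, γinv (γ z) = z) ∧ (∀ w ∈ V, γ (γinv w) = w) ∧
    ContinuousOn γ U ∧ ContinuousOn γinv V ∧
    (∀ ε : ℝ, 0 < ε → ∃ N : ℕ, ∀ n : ℤ, (N : ℤ) ≤ |n| → ∀ z ∈ U,
      dist (It φ n z) (It φ n (γ z)) ≤ ε)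

/-- Stable local conjugacy `x ∼_lcs y`: a homeomorphism of `Xᵘ(x, δ)` onto
its image in `Xᵘ(y, δ')` sending `x` to `y`, uniformly asymptotic in forward
time. -/
def StableLC (φ : X ≃ₜ X) (x y : X) : Prop :=
  ∃ (δ δ' : ℝ) (γ : X → X), 0 < δ ∧ 0 < δ' ∧
    Set.MapsTo γ (locU φ x δ) (locU φ y δ') ∧
    Set.InjOn γ (locU φ x δ) ∧ ContinuousOn γ (locU φ x δ) ∧ γ x = y ∧
    (∀ ε : ℝ, 0 < ε → ∃ N : ℕ, ∀ n : ℕ, N ≤ n → ∀ z ∈ locU φ x δ,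
      dist (It φ n z) (It φ n (γ z)) ≤ ε)

/-- Unstable local conjugacy `x ∼_lcu y`: a homeomorphism of `Xˢ(x, δ)` onto
its image in `Xˢ(y, δ')` sending `x` to `y`, uniformly asymptotic in backward
time. -/
def UnstableLC (φ : X ≃ₜ X) (x y : X) : Prop :=
  ∃ (δ δ' : ℝ) (γ : X → X), 0 < δ ∧ 0 < δ' ∧
    Set.MapsTo γ (locS φ x δ) (locS φ y δ') ∧
    Set.InjOn γ (locS φ x δ) ∧ ContinuousOn γ (locS φ x δ) ∧ γ x = y ∧
    (∀ ε : ℝ, 0 < ε → ∃ N : ℕ, ∀ n : ℕ, N ≤ n → ∀ z ∈ locS φ x δ,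
      dist (It φ (-(n : ℤ)) z) (It φ (-(n : ℤ)) (γ z)) ≤ ε)


omit [CompactSpace X] in
lemma continuous_It (φ : X ≃ₜ X) (n : ℤ) : Continuous (It φ n) := by
  induction n using Int.induction_on with
  | zero => exact continuous_id
  | succ k ih =>
      have h : It φ ((k : ℤ) + 1) = fun x => It φ k (φ x) := by
        funext x
        simp [It, zpow_add_one, Equiv.Perm.mul_apply]
      rw [h]; exact ih.comp φ.continuous
  | pred k ih =>
      have h : It φ (-(k : ℤ) - 1) = fun x => It φ (-(k:ℤ)) (φ.symm x) := by
        funext x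
        simp [It, zpow_sub_one, Equiv.Perm.mul_apply, Equiv.Perm.inv_def]
      rw [h]; exact ih.comp φ.symm.continuous

omit [CompactSpace X] in
lemma It_zero' (φ : X ≃ₜ X) (x : X) : It φ 0 x = x := rfl

/-- a local conjugacy uniformly preserves local stable and
unstable sets over a compact subset of its domain. -/
theorem locConj_uniform_stable_unstable (φ : X ≃ₜ X) (εX η lam : ℝ)
    (hexp : IsExpansive φ εX) (had : IsAdapted φ η lam)
    (U V : Set X) (γ γinv : X → X) (hU : IsOpen U) (hV : IsOpen V)
    (hmaps : Set.MapsTo γ U V) (hmaps' : Set.MapsTo γinv V U)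
    (hli : ∀ z ∈ U, γinv (γ z) = z) (hri : ∀ w ∈ V, γ (γinv w) = w)
    (hc : ContinuousOn γ U) (hc' : ContinuousOn γinv V)
    (hconj : ∀ ε : ℝ, 0 < ε → ∃ N : ℕ, ∀ n : ℤ, (N : ℤ) ≤ |n| → ∀ z ∈ U,
      dist (It φ n z) (It φ n (γ z)) ≤ ε)
    (W : Set X) (hW : IsCompact W) (hWU : W ⊆ U) :
    ∀ ε : ℝ, 0 < ε → ∃ δ : ℝ, 0 < δ ∧ ∀ z ∈ W,
      locS φ z δ ⊆ U ∧ locU φ z δ ⊆ U ∧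
      γ '' locS φ z δ ⊆ locS φ (γ z) ε ∧
      γ '' locU φ z δ ⊆ locU φ (γ z) ε := by
  intro ε hε
  have hε3 : (0:ℝ) < ε / 3 := by linarith
  obtain ⟨N, hN⟩ := hconj (ε / 3) hε3
  obtain ⟨r, hr, hthick⟩ := hW.exists_thickening_subset_open hU hWU
  set K : Set X := Metric.cthickening (r / 2) W with hKdef
  have hKU : K ⊆ U :=
    (Metric.cthickening_subset_thickening' hr (by linarith) W).trans hthick
  have hKc : IsCompact K := Metric.isClosed_cthickening.isCompact
  set Ψ : X → (Fin (2 * N + 1) → X) :=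
    fun x => fun i => It φ ((i.val : ℤ) - N) (γ x) with hΨ
  have hcΨ : ContinuousOn Ψ K := by
    apply continuousOn_pi.2
    intro i
    exact (continuous_It φ _).comp_continuousOn (hc.mono hKU)
  obtain ⟨δ₂, hδ₂, hδ₂'⟩ :=
    (Metric.uniformContinuousOn_iff_le.1 (hKc.uniformContinuousOn_of_continuous hcΨ)) ε hε
  refine ⟨min (min δ₂ (ε / 3)) (r / 2), by positivity, ?_⟩
  set δ := min (min δ₂ (ε / 3)) (r / 2) with hδdef
  have hδδ₂ : δ ≤ δ₂ := le_trans (min_le_left _ _) (min_le_left _ _)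
  have hδε3 : δ ≤ ε / 3 := le_trans (min_le_left _ _) (min_le_right _ _)
  have hδr : δ ≤ r / 2 := min_le_right _ _
  intro z hz
  have hzU : z ∈ U := hWU hz
  have hzK : z ∈ K := Metric.self_subset_cthickening W hz
  have hball : ∀ w : X, dist z w ≤ δ → w ∈ K := by
    intro w hw
    exact Metric.mem_cthickening_of_dist_le w z (r / 2) W hz
      ((dist_comm w z ▸ hw).trans hδr)
  have hSsub : locS φ z δ ⊆ K := by
    intro w hw
    exact hball w (by simpa [It_zero'] using hw 0)
  have hUsub : locU φ z δ ⊆ K := by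
    intro w hw
    have h0 := hw 0
    simp only [Nat.cast_zero, neg_zero, It_zero'] at h0
    exact hball w h0
  have key : ∀ w ∈ K, dist z w ≤ δ → ∀ m : ℤ, |m| ≤ N →
      dist (It φ m (γ z)) (It φ m (γ w)) ≤ ε := by
    intro w hwK hzw m hm
    have hdΨ : dist (Ψ z) (Ψ w) ≤ ε := hδ₂' z hzK w hwK (hzw.trans hδδ₂)
    have hm' : 0 ≤ m + N := by
      have := abs_le.1 hm
      omega
    set i : Fin (2 * N + 1) := ⟨(m + N).toNat, by
      have := abs_le.1 hm
      omega⟩ with hi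
    have hival : ((i.val : ℤ) - N) = m := by
      simp only [hi, Int.toNat_of_nonneg hm']
      ring
    have := dist_le_pi_dist (Ψ z) (Ψ w) i
    rw [hΨ] at this
    simp only [hival] at this
    exact this.trans hdΨ
  refine ⟨hSsub.trans hKU, hUsub.trans hKU, ?_, ?_⟩
  · rintro _ ⟨w, hw, rfl⟩
    intro n
    have hwK : w ∈ K := hSsub hw
    have hwU : w ∈ U := hKU hwK
    by_cases hn : N ≤ n
    · have h1 : dist (It φ n z) (It φ n (γ z)) ≤ ε / 3 :=
        hN n (by simpa using hn) z hzU
      have h2 : dist (It φ n w) (It φ n (γ w)) ≤ ε / 3 :=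
        hN n (by simpa using hn) w hwU
      have h3 : dist (It φ n z) (It φ n w) ≤ δ := hw n
      calc dist (It φ n (γ z)) (It φ n (γ w))
          ≤ dist (It φ n (γ z)) (It φ n z) + dist (It φ n z) (It φ n w)
            + dist (It φ n w) (It φ n (γ w)) := dist_triangle4 _ _ _ _
        _ ≤ ε / 3 + δ + ε / 3 := by
            exact add_le_add (add_le_add (by rw [dist_comm]; exact h1) h3) h2
        _ ≤ ε := by linarith
    · have h0 : dist z w ≤ δ := by simpa [It_zero'] using hw 0
      have := key w hwK h0 n (by
        rw [abs_of_nonneg (by positivity : (0:ℤ) ≤ (n:ℤ))]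
        omega)
      exact this
  · rintro _ ⟨w, hw, rfl⟩
    intro n
    have hwK : w ∈ K := hUsub hw
    have hwU : w ∈ U := hKU hwK
    by_cases hn : N ≤ n
    · have habs : (N : ℤ) ≤ |(-(n : ℤ))| := by
        rw [abs_neg, abs_of_nonneg (by positivity : (0:ℤ) ≤ (n:ℤ))]
        exact_mod_cast hn
      have h1 : dist (It φ (-(n:ℤ)) z) (It φ (-(n:ℤ)) (γ z)) ≤ ε / 3 :=
        hN _ habs z hzU
      have h2 : dist (It φ (-(n:ℤ)) w) (It φ (-(n:ℤ)) (γ w)) ≤ ε / 3 :=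
        hN _ habs w hwU
      have h3 : dist (It φ (-(n:ℤ)) z) (It φ (-(n:ℤ)) w) ≤ δ := hw n
      calc dist (It φ (-(n:ℤ)) (γ z)) (It φ (-(n:ℤ)) (γ w))
          ≤ dist (It φ (-(n:ℤ)) (γ z)) (It φ (-(n:ℤ)) z)
            + dist (It φ (-(n:ℤ)) z) (It φ (-(n:ℤ)) w)
            + dist (It φ (-(n:ℤ)) w) (It φ (-(n:ℤ)) (γ w)) := dist_triangle4 _ _ _ _
        _ ≤ ε / 3 + δ + ε / 3 := by
            exact add_le_add (add_le_add (by rw [dist_comm]; exact h1) h3) h2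
        _ ≤ ε := by linarith
    · have h0 : dist z w ≤ δ := by
        have h0' := hw 0
        simp only [Nat.cast_zero, neg_zero, It_zero'] at h0'
        exact h0'
      exact key w hwK h0 (-(n:ℤ)) (by
        rw [abs_neg, abs_of_nonneg (by positivity : (0:ℤ) ≤ (n:ℤ))]
        omega)


end Paper
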